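/- Let d ≥ 1, K ≥ 0, and let φ : ℝ^d → ℝ be K-Lipschitz. Fix t > 0 and set ψ_t(y) = ‖y‖²/2 + t·φ(y), ψ_t*(x) = sup_y (⟨x,y⟩ − ψ_t(y)), ψ_t**(y) = sup_x (⟨x,y⟩ − ψ_t*(x)), and Θ_t = {y : ψ_t**(y) = ψ_t(y)}. Then: (i) at every point y where ψ_t** is differentiable, ‖∇ψ_t**(y) − y‖ ≤ Kt; (ii) if y ∈ Θ_t and φ is differentiable at y, then ψ_t** is differentiable at y and ∇ψ_t**(y) = y + t·∇φ(y). -/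

import Mathlib

open scoped RealInnerProductSpace
noncomputable section

/-- Legendre transform: `f*(x) = sup_y (⟨x,y⟩ − f(y))`. -/
def conj {d : ℕ} (f : EuclideanSpace ℝ (Fin d) → ℝ)
    (x : EuclideanSpace ℝ (Fin d)) : ℝ :=
  ⨆ y : EuclideanSpace ℝ (Fin d), (⟪x, y⟫ - f y)

/-- `ψ_t(y) = ‖y‖²/2 + t φ(y)`. -/
def psiFun {d : ℕ} (φ : EuclideanSpace ℝ (Fin d) → ℝ) (t : ℝ)
    (y : EuclideanSpace ℝ (Fin d)) : ℝ :=
  ‖y‖ ^ 2 / 2 + t * φ y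

section Aux

open Filter Asymptotics

variable {d : ℕ}

/-- gradient of `‖·‖²/2` -/
lemma quad_hasGradientAt (y : EuclideanSpace ℝ (Fin d)) :
    HasGradientAt (fun z : EuclideanSpace ℝ (Fin d) => ‖z‖ ^ 2 / 2) y y := by
  rw [hasGradientAt_iff_isLittleO_nhds_zero]
  have heq : (fun h : EuclideanSpace ℝ (Fin d) => ‖y + h‖ ^ 2 / 2 - ‖y‖ ^ 2 / 2 - ⟪y, h⟫)
      = fun h => ‖h‖ ^ 2 / 2 := by
    funext h
    rw [norm_add_sq_real]
    ring
  rw [heq, isLittleO_iff]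
  intro c hc
  rw [Metric.eventually_nhds_iff]
  refine ⟨2 * c, by positivity, fun {h} hh => ?_⟩
  rw [dist_zero_right] at hh
  have h1 : ‖h‖ ^ 2 / 2 ≤ c * ‖h‖ := by nlinarith [norm_nonneg h]
  have h2 : ‖‖h‖ ^ 2 / 2‖ = ‖h‖ ^ 2 / 2 := Real.norm_of_nonneg (by positivity)
  simpa [h2] using h1

/-- a one-sided Lipschitz bound at a point of gradient existence bounds the gradient -/
lemma grad_bound {f : EuclideanSpace ℝ (Fin d) → ℝ} {g x : EuclideanSpace ℝ (Fin d)} {C : ℝ}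
    (hC : 0 ≤ C) (hg : HasGradientAt f g x)
    (hf : ∀ z, f z - f x ≤ C * ‖z - x‖) : ‖g‖ ≤ C := by
  rcases eq_or_ne g 0 with h0 | h0
  · simp [h0, hC]
  have hgpos : (0:ℝ) < ‖g‖ := norm_pos_iff.2 h0
  have hg' := hasGradientAt_iff_isLittleO_nhds_zero.1 hg
  refine le_of_forall_pos_le_add fun ε hε => ?_
  have h1 := (isLittleO_iff.1 hg') (half_pos hε)
  rw [Metric.eventually_nhds_iff] at h1
  obtain ⟨δ, hδ, hb⟩ := h1
  set s : ℝ := δ / (2 * ‖g‖) with hs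
  have hspos : 0 < s := div_pos hδ (by positivity)
  have hnorm : ‖s • g‖ = s * ‖g‖ := by
    rw [norm_smul, Real.norm_of_nonneg hspos.le]
  have hlt : dist (s • g) (0 : EuclideanSpace ℝ (Fin d)) < δ := by
    rw [dist_zero_right, hnorm]
    have : s * ‖g‖ = δ / 2 := by
      rw [hs, div_mul_eq_mul_div, div_eq_div_iff (by positivity) two_ne_zero]; ring
    rw [this]; linarith
  have hbb := hb hlt
  have hin : ⟪g, s • g⟫ = s * ‖g‖ ^ 2 := by
    rw [real_inner_smul_right, real_inner_self_eq_norm_sq]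
  rw [hin, hnorm] at hbb
  have hup : f (x + s • g) - f x ≤ C * (s * ‖g‖) := by
    have := hf (x + s • g)
    simpa [hnorm] using this
  have habs : |f (x + s • g) - f x - s * ‖g‖ ^ 2| ≤ ε / 2 * (s * ‖g‖) := by
    simpa [Real.norm_eq_abs, abs_of_nonneg (mul_nonneg hspos.le (norm_nonneg g))] using hbb
  rw [abs_le] at habs
  have key : s * ‖g‖ ^ 2 ≤ C * (s * ‖g‖) + ε / 2 * (s * ‖g‖) := by linarith [habs.1]
  nlinarith [mul_pos hspos hgpos]

end Aux

theorem stmt15 (d : ℕ) (hd : 1 ≤ d) (K : ℝ) (hK : 0 ≤ K)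
    (φ : EuclideanSpace ℝ (Fin d) → ℝ)
    (hLip : ∀ y z, |φ y - φ z| ≤ K * ‖y - z‖)
    (t : ℝ) (ht : 0 < t) :
    (∀ y : EuclideanSpace ℝ (Fin d),
      DifferentiableAt ℝ (conj (conj (psiFun φ t))) y →
        ‖gradient (conj (conj (psiFun φ t))) y - y‖ ≤ K * t) ∧
    (∀ y : EuclideanSpace ℝ (Fin d),
      conj (conj (psiFun φ t)) y = psiFun φ t y →
      DifferentiableAt ℝ φ y →
        DifferentiableAt ℝ (conj (conj (psiFun φ t))) y ∧
        gradient (conj (conj (psiFun φ t))) y = y + t • gradient φ y) := by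
  set ψ := psiFun φ t with hψ
  -- basic term bound
  have term_le : ∀ x y : EuclideanSpace ℝ (Fin d), ⟪x, y⟫ - ψ y ≤ (‖x‖ + K * t) ^ 2 / 2 - t * φ 0 := by
    intro x y
    have h1 : ⟪x, y⟫ ≤ ‖x‖ * ‖y‖ := real_inner_le_norm x y
    have h2 : φ 0 - φ y ≤ K * ‖y‖ := by
      have := hLip 0 y
      rw [abs_sub_le_iff] at this
      simpa using this.1
    have h3 : t * (φ 0 - φ y) ≤ t * (K * ‖y‖) := mul_le_mul_of_nonneg_left h2 ht.le
    simp only [hψ, psiFun]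
    nlinarith [norm_nonneg y, norm_nonneg x, sq_nonneg (‖x‖ + K * t - ‖y‖)]
  have bdd1 : ∀ x : EuclideanSpace ℝ (Fin d), BddAbove (Set.range fun y : EuclideanSpace ℝ (Fin d) => ⟪x, y⟫ - ψ y) := by
    intro x
    exact ⟨(‖x‖ + K * t) ^ 2 / 2 - t * φ 0, by
      rintro _ ⟨y, rfl⟩; exact term_le x y⟩
  have conj_ge : ∀ x y : EuclideanSpace ℝ (Fin d), ⟪x, y⟫ - ψ y ≤ conj ψ x := fun x y => le_ciSup (bdd1 x) y
  have bdd2 : ∀ y : EuclideanSpace ℝ (Fin d), BddAbove (Set.range fun x : EuclideanSpace ℝ (Fin d) => ⟪y, x⟫ - conj ψ x) := by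
    intro y
    exact ⟨ψ y, by
      rintro _ ⟨x, rfl⟩
      have h1 := conj_ge x y
      have h2 : ⟪y, x⟫ = ⟪x, y⟫ := real_inner_comm x y
      simp only [h2]
      linarith⟩
  have fy2 : ∀ x y : EuclideanSpace ℝ (Fin d), ⟪y, x⟫ - conj ψ x ≤ conj (conj ψ) y := fun x y => le_ciSup (bdd2 y) x
  have biconj_le : ∀ y : EuclideanSpace ℝ (Fin d), conj (conj ψ) y ≤ ψ y := by
    intro y
    apply ciSup_le
    intro x
    have h1 := conj_ge x y
    have h2 : ⟪y, x⟫ = ⟪x, y⟫ := real_inner_comm x y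
    simp only [h2]
    linarith
  -- Claim 1 : Lipschitz property of `conj ψ - ‖·‖²/2`
  have claim1 : ∀ x x' : EuclideanSpace ℝ (Fin d), conj ψ x' ≤ conj ψ x + (‖x'‖ ^ 2 - ‖x‖ ^ 2) / 2 + K * t * ‖x' - x‖ := by
    intro x x'
    apply ciSup_le
    intro y
    set z : EuclideanSpace ℝ (Fin d) := y - (x' - x) with hz
    have key : ⟪x, z⟫ - ψ z ≤ conj ψ x := conj_ge x z
    have hzy : x' - y = x - z := by rw [hz]; abel
    have hzy2 : z - y = -(x' - x) := by rw [hz]; abel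
    have hphi : t * (φ z - φ y) ≤ t * (K * ‖x' - x‖) := by
      refine mul_le_mul_of_nonneg_left ?_ ht.le
      have := hLip z y
      rw [abs_sub_le_iff] at this
      have h := this.1
      rwa [hzy2, norm_neg] at h
    have e1 : ‖x' - y‖ ^ 2 = ‖x'‖ ^ 2 - 2 * ⟪x', y⟫ + ‖y‖ ^ 2 := norm_sub_sq_real x' y
    have e2 : ‖x - z‖ ^ 2 = ‖x‖ ^ 2 - 2 * ⟪x, z⟫ + ‖z‖ ^ 2 := norm_sub_sq_real x z
    rw [hzy] at e1
    simp only [hψ, psiFun] at key ⊢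
    nlinarith [key, hphi, e1, e2]
  -- Claim 2 : Lipschitz property of `conj (conj ψ) - ‖·‖²/2`
  have claim2 : ∀ a b : EuclideanSpace ℝ (Fin d),
      conj (conj ψ) a ≤ conj (conj ψ) b + (‖a‖ ^ 2 - ‖b‖ ^ 2) / 2 + K * t * ‖a - b‖ := by
    intro a b
    apply ciSup_le
    intro x
    set x' : EuclideanSpace ℝ (Fin d) := x + b - a with hx'
    have key : ⟪x', b⟫ - conj ψ x' ≤ conj (conj ψ) b := by
      have := fy2 x' b
      rwa [real_inner_comm x' b] at this
    have hcomm : ⟪a, x⟫ = ⟪x, a⟫ := real_inner_comm x a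
    simp only [hcomm]
    have hxa : x - a = x' - b := by rw [hx']; abel
    have hx'x : x' - x = -(a - b) := by rw [hx']; abel
    have hc1 : conj ψ x' ≤ conj ψ x + (‖x'‖ ^ 2 - ‖x‖ ^ 2) / 2 + K * t * ‖a - b‖ := by
      have := claim1 x x'
      rwa [hx'x, norm_neg] at this
    have e1 : ‖x - a‖ ^ 2 = ‖x‖ ^ 2 - 2 * ⟪x, a⟫ + ‖a‖ ^ 2 := norm_sub_sq_real x a
    have e2 : ‖x' - b‖ ^ 2 = ‖x'‖ ^ 2 - 2 * ⟪x', b⟫ + ‖b‖ ^ 2 := norm_sub_sq_real x' b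
    rw [hxa] at e1
    nlinarith [key, hc1, e1, e2]
  constructor
  · -- part (i)
    intro y hdiff
    have hp : HasGradientAt (conj (conj ψ)) (gradient (conj (conj ψ)) y) y :=
      hdiff.hasGradientAt
    have hq := quad_hasGradientAt y
    have hN : HasGradientAt (fun z : EuclideanSpace ℝ (Fin d) => conj (conj ψ) z - ‖z‖ ^ 2 / 2)
        (gradient (conj (conj ψ)) y - y) y := by
      rw [hasGradientAt_iff_hasFDerivAt] at hp hq ⊢
      have := hp.sub hq
      rw [map_sub]; exact this
    refine grad_bound (by positivity) hN fun z => ?_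
    have := claim2 z y
    linarith
  · -- part (ii)
    intro y htouch hdphi
    set p : EuclideanSpace ℝ (Fin d) := y + t • gradient φ y with hp
    have hφg : HasGradientAt φ (gradient φ y) y := hdphi.hasGradientAt
    have htφ : HasGradientAt (fun z : EuclideanSpace ℝ (Fin d) => t * φ z) (t • gradient φ y) y := by
      rw [hasGradientAt_iff_hasFDerivAt] at hφg ⊢
      have := hφg.const_mul t
      simpa [map_smul] using this
    have hψg : HasGradientAt ψ p y := by
      have hq := quad_hasGradientAt y
      rw [hasGradientAt_iff_hasFDerivAt] at hq htφ ⊢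
      have := hq.add htφ
      have heq : ψ = fun z : EuclideanSpace ℝ (Fin d) => ‖z‖ ^ 2 / 2 + t * φ z := by
        funext z; simp [hψ, psiFun]
      rw [heq, hp]
      rw [map_add]; exact this
    -- midpoint convexity of the biconjugate
    have mid : ∀ h : EuclideanSpace ℝ (Fin d), 2 * conj (conj ψ) y ≤ conj (conj ψ) (y + h) + conj (conj ψ) (y - h) := by
      intro h
      have : conj (conj ψ) y ≤ (conj (conj ψ) (y + h) + conj (conj ψ) (y - h)) / 2 := by
        apply ciSup_le
        intro x
        have k1 := fy2 x (y + h)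
        have k2 := fy2 x (y - h)
        have i1 : ⟪y + h, x⟫ = ⟪y, x⟫ + ⟪h, x⟫ := inner_add_left y h x
        have i2 : ⟪y - h, x⟫ = ⟪y, x⟫ - ⟪h, x⟫ := inner_sub_left y h x
        linarith
      linarith
    have hkey : HasGradientAt (conj (conj ψ)) p y := by
      rw [hasGradientAt_iff_isLittleO_nhds_zero]
      have he := hasGradientAt_iff_isLittleO_nhds_zero.1 hψg
      rw [Asymptotics.isLittleO_iff] at he ⊢
      intro c hc
      have h1 := he (half_pos hc)
      have hneg : Filter.Tendsto (fun h : EuclideanSpace ℝ (Fin d) => -h) (nhds 0)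
          (nhds (0 : EuclideanSpace ℝ (Fin d))) := by
        simpa using (continuous_neg.tendsto (0 : EuclideanSpace ℝ (Fin d)))
      have h2 := hneg.eventually h1
      filter_upwards [h1, h2] with h hh1 hh2
      rw [Real.norm_eq_abs, abs_le] at hh1 hh2
      rw [norm_neg] at hh2
      have hpn : ⟪p, -h⟫ = -⟪p, h⟫ := inner_neg_right p h
      rw [hpn] at hh2
      have hn : (0:ℝ) ≤ ‖h‖ := norm_nonneg h
      have hb1 := biconj_le (y + h)
      have hb2 := biconj_le (y + -h)
      have hsub : y - h = y + -h := sub_eq_add_neg y h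
      have hm' : 2 * ψ y ≤ conj (conj ψ) (y + h) + ψ (y + -h) := by
        have hm := mid h
        rw [hsub, htouch] at hm
        linarith
      have hcc : c / 2 * ‖h‖ + c / 2 * ‖h‖ = c * ‖h‖ := by ring
      have hpos : (0:ℝ) ≤ c / 2 * ‖h‖ := by positivity
      rw [Real.norm_eq_abs, abs_le, htouch]
      constructor
      · linarith [hm', hh2.2]
      · linarith [hb1, hh1.2]
    exact ⟨hkey.differentiableAt, hkey.gradient⟩
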